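/- Let Ω ⊆ ℝ^d be an open bounded set with Lebesgue measure, and let v : ℝ^d → ℝ and ϖ : ℝ^d → ℝ be differentiable functions such that v, |∇v| and |∇(ϖ v)| are square-integrable on Ω. Assume: ϖ(x) ≥ w_min > 0 for all x ∈ Ω; ‖∇ϖ‖_{L^∞(Ω)} ≤ K for some K ≥ 0; and the Poincaré-type inequality ‖v‖_{L²(Ω)} ≤ C_Ω ‖∇v‖_{L²(Ω)} holds with a constant C_Ω > 0. Then ∫_Ω ∇(ϖ v) · ∇v dx ≥ (w_min − C_Ω K) ‖∇v‖²_{L²(Ω)}. In particular, if C_Ω K < w_min, the weighted Galerkin bilinear form b(ϖ v, v) := ∫_Ω ∇(ϖ v)·∇v is coercive in ‖∇v‖_{L²(Ω)}. -/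

import Mathlib

open Topology Filter MeasureTheory

/-- Weighted Galerkin coercivity estimate for the Laplacian: if
`ϖ ≥ w_min > 0` on `Ω`, `‖∇ϖ‖_{L^∞(Ω)} ≤ K`, and the Poincaré inequality
`‖v‖_{L²(Ω)} ≤ C_Ω ‖∇v‖_{L²(Ω)}` holds, then
`∫_Ω ∇(ϖ v) · ∇v ≥ (w_min − C_Ω K) ‖∇v‖²_{L²(Ω)}`. -/
theorem weighted_galerkin_laplacian_coercivity
    {d : ℕ} (Ω : Set (EuclideanSpace ℝ (Fin d)))
    (hΩopen : IsOpen Ω) (hΩbdd : Bornology.IsBounded Ω)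
    (v ϖ : EuclideanSpace ℝ (Fin d) → ℝ)
    (hv : Differentiable ℝ v) (hϖ : Differentiable ℝ ϖ)
    (hv_L2 : Integrable (fun x => (v x) ^ 2) (volume.restrict Ω))
    (hgradv_L2 : Integrable (fun x => ‖gradient v x‖ ^ 2) (volume.restrict Ω))
    (hgradϖv_L2 : Integrable (fun x => ‖gradient (fun y => ϖ y * v y) x‖ ^ 2)
      (volume.restrict Ω))
    (wmin K CΩ : ℝ) (hwmin : 0 < wmin) (hK : 0 ≤ K) (hCΩ : 0 < CΩ)
    (hϖ_lower : ∀ x ∈ Ω, wmin ≤ ϖ x)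
    (hgradϖ_bdd : ∀ᵐ x ∂(volume.restrict Ω), ‖gradient ϖ x‖ ≤ K)
    (hPoincare : Real.sqrt (∫ x in Ω, (v x) ^ 2) ≤
      CΩ * Real.sqrt (∫ x in Ω, ‖gradient v x‖ ^ 2)) :
    (wmin - CΩ * K) * ∫ x in Ω, ‖gradient v x‖ ^ 2 ≤
      ∫ x in Ω, (inner ℝ (gradient (fun y => ϖ y * v y) x) (gradient v x) : ℝ) := by
  set μ := volume.restrict Ω with hμ
  have hmeas_grad : ∀ f : EuclideanSpace ℝ (Fin d) → ℝ, Measurable (gradient f) := fun f =>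
    ((InnerProductSpace.toDual ℝ (EuclideanSpace ℝ (Fin d))).symm.continuous.measurable).comp
      (measurable_fderiv ℝ f)
  have hmv := hmeas_grad v
  have hmϖv := hmeas_grad (fun y => ϖ y * v y)
  -- product rule for gradients
  have hgrad_mul : ∀ x, gradient (fun y => ϖ y * v y) x
      = ϖ x • gradient v x + v x • gradient ϖ x := by
    intro x
    unfold gradient
    rw [fderiv_fun_mul (hϖ x) (hv x)]
    simp [map_add, _root_.map_smul]
  -- integrability of the inner product
  have hint_inner : Integrable
      (fun x => (inner ℝ (gradient (fun y => ϖ y * v y) x) (gradient v x) : ℝ)) μ := by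
    have hbound : Integrable (fun x =>
        (‖gradient (fun y => ϖ y * v y) x‖ ^ 2 + ‖gradient v x‖ ^ 2) / 2) μ :=
      (hgradϖv_L2.add hgradv_L2).div_const 2
    refine Integrable.mono hbound ((hmϖv.inner hmv).aestronglyMeasurable) ?_
    filter_upwards with x
    have h1 := abs_real_inner_le_norm (gradient (fun y => ϖ y * v y) x) (gradient v x)
    have h2 : ‖gradient (fun y => ϖ y * v y) x‖ * ‖gradient v x‖ ≤
        (‖gradient (fun y => ϖ y * v y) x‖ ^ 2 + ‖gradient v x‖ ^ 2) / 2 := by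
      nlinarith [sq_nonneg (‖gradient (fun y => ϖ y * v y) x‖ - ‖gradient v x‖)]
    rw [Real.norm_eq_abs, Real.norm_eq_abs]
    exact (h1.trans h2).trans (le_abs_self _)
  -- integrability of |v| * ‖∇v‖
  have hint_vg : Integrable (fun x => |v x| * ‖gradient v x‖) μ := by
    have hbound : Integrable (fun x => ((v x) ^ 2 + ‖gradient v x‖ ^ 2) / 2) μ :=
      (hv_L2.add hgradv_L2).div_const 2
    refine Integrable.mono hbound
      ((hv.continuous.measurable.abs.mul hmv.norm).aestronglyMeasurable) ?_
    filter_upwards with x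
    rw [Real.norm_eq_abs, Real.norm_eq_abs, abs_mul, abs_abs, abs_norm]
    have h2 : |v x| * ‖gradient v x‖ ≤ ((v x) ^ 2 + ‖gradient v x‖ ^ 2) / 2 := by
      nlinarith [sq_nonneg (|v x| - ‖gradient v x‖), sq_abs (v x)]
    exact h2.trans (le_abs_self _)
  -- pointwise a.e. lower bound
  have hae : (fun x => wmin * ‖gradient v x‖ ^ 2 - K * (|v x| * ‖gradient v x‖))
      ≤ᵐ[μ] fun x => (inner ℝ (gradient (fun y => ϖ y * v y) x) (gradient v x) : ℝ) := by
    filter_upwards [hgradϖ_bdd, ae_restrict_mem hΩopen.measurableSet] with x hKx hxΩ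
    rw [hgrad_mul x, inner_add_left, real_inner_smul_left, real_inner_smul_left,
      real_inner_self_eq_norm_sq]
    have h1 : wmin * ‖gradient v x‖ ^ 2 ≤ ϖ x * ‖gradient v x‖ ^ 2 :=
      mul_le_mul_of_nonneg_right (hϖ_lower x hxΩ) (sq_nonneg _)
    have h2 : |v x * inner ℝ (gradient ϖ x) (gradient v x)| ≤ K * (|v x| * ‖gradient v x‖) := by
      rw [abs_mul]
      have hg : |(inner ℝ (gradient ϖ x) (gradient v x) : ℝ)| ≤ K * ‖gradient v x‖ :=
        (abs_real_inner_le_norm _ _).trans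
          (mul_le_mul_of_nonneg_right hKx (norm_nonneg _))
      calc |v x| * |(inner ℝ (gradient ϖ x) (gradient v x) : ℝ)|
          ≤ |v x| * (K * ‖gradient v x‖) :=
            mul_le_mul_of_nonneg_left hg (abs_nonneg _)
        _ = K * (|v x| * ‖gradient v x‖) := by ring
    have := neg_abs_le (v x * inner ℝ (gradient ϖ x) (gradient v x) : ℝ)
    linarith
  -- integrate
  have hintf : Integrable
      (fun x => wmin * ‖gradient v x‖ ^ 2 - K * (|v x| * ‖gradient v x‖)) μ :=
    (hgradv_L2.const_mul wmin).sub (hint_vg.const_mul K)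
  have hmono := integral_mono_ae hintf hint_inner hae
  have hsplit : ∫ x, (wmin * ‖gradient v x‖ ^ 2 - K * (|v x| * ‖gradient v x‖)) ∂μ
      = wmin * (∫ x, ‖gradient v x‖ ^ 2 ∂μ) - K * ∫ x, |v x| * ‖gradient v x‖ ∂μ := by
    rw [integral_sub (hgradv_L2.const_mul wmin) (hint_vg.const_mul K),
      integral_const_mul, integral_const_mul]
  rw [hsplit] at hmono
  -- Cauchy-Schwarz: ∫ |v|‖∇v‖ ≤ √(∫v²) √(∫‖∇v‖²)
  have hCS : ∫ x, |v x| * ‖gradient v x‖ ∂μ ≤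
      Real.sqrt (∫ x in Ω, (v x) ^ 2) * Real.sqrt (∫ x in Ω, ‖gradient v x‖ ^ 2) := by
    have hconj : (2:ℝ).HolderConjugate 2 := Real.HolderConjugate.two_two
    have hf2 : MemLp (fun x => |v x|) (ENNReal.ofReal 2) μ := by
      rw [show ENNReal.ofReal 2 = 2 by norm_num]
      refine (memLp_two_iff_integrable_sq hv.continuous.abs.aestronglyMeasurable).2 ?_
      simpa [sq_abs] using hv_L2
    have hg2 : MemLp (fun x => ‖gradient v x‖) (ENNReal.ofReal 2) μ := by
      rw [show ENNReal.ofReal 2 = 2 by norm_num]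
      exact (memLp_two_iff_integrable_sq hmv.norm.aestronglyMeasurable).2 hgradv_L2
    have hH := integral_mul_le_Lp_mul_Lq_of_nonneg hconj
      (Filter.Eventually.of_forall fun x => abs_nonneg (v x))
      (Filter.Eventually.of_forall fun x => norm_nonneg (gradient v x)) hf2 hg2
    calc ∫ x, |v x| * ‖gradient v x‖ ∂μ
        ≤ (∫ x, |v x| ^ (2:ℝ) ∂μ) ^ (1/(2:ℝ)) * (∫ x, ‖gradient v x‖ ^ (2:ℝ) ∂μ) ^ (1/(2:ℝ)) :=
          hH
      _ = Real.sqrt (∫ x in Ω, (v x) ^ 2) * Real.sqrt (∫ x in Ω, ‖gradient v x‖ ^ 2) := by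
          rw [Real.sqrt_eq_rpow, Real.sqrt_eq_rpow]
          congr 2
          · refine integral_congr_ae (Filter.Eventually.of_forall fun x => ?_)
            show |v x| ^ (2:ℝ) = v x ^ 2
            rw [show (2:ℝ) = ((2:ℕ):ℝ) by norm_num, Real.rpow_natCast, sq_abs]
          · refine integral_congr_ae (Filter.Eventually.of_forall fun x => ?_)
            show ‖gradient v x‖ ^ (2:ℝ) = ‖gradient v x‖ ^ 2
            rw [show (2:ℝ) = ((2:ℕ):ℝ) by norm_num, Real.rpow_natCast]
  -- combine
  have hGnn : (0:ℝ) ≤ ∫ x in Ω, ‖gradient v x‖ ^ 2 := integral_nonneg fun x => sq_nonneg _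
  have hP2 : Real.sqrt (∫ x in Ω, (v x) ^ 2) * Real.sqrt (∫ x in Ω, ‖gradient v x‖ ^ 2)
      ≤ CΩ * ∫ x in Ω, ‖gradient v x‖ ^ 2 := by
    calc Real.sqrt (∫ x in Ω, (v x) ^ 2) * Real.sqrt (∫ x in Ω, ‖gradient v x‖ ^ 2)
        ≤ (CΩ * Real.sqrt (∫ x in Ω, ‖gradient v x‖ ^ 2)) *
            Real.sqrt (∫ x in Ω, ‖gradient v x‖ ^ 2) :=
          mul_le_mul_of_nonneg_right hPoincare (Real.sqrt_nonneg _)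
      _ = CΩ * (Real.sqrt (∫ x in Ω, ‖gradient v x‖ ^ 2) *
            Real.sqrt (∫ x in Ω, ‖gradient v x‖ ^ 2)) := by ring
      _ = CΩ * ∫ x in Ω, ‖gradient v x‖ ^ 2 := by rw [Real.mul_self_sqrt hGnn]
  have hKv : K * (∫ x, |v x| * ‖gradient v x‖ ∂μ)
      ≤ K * (CΩ * ∫ x in Ω, ‖gradient v x‖ ^ 2) :=
    mul_le_mul_of_nonneg_left (hCS.trans hP2) hK
  have hfinal : (wmin - CΩ * K) * (∫ x in Ω, ‖gradient v x‖ ^ 2)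
      ≤ wmin * (∫ x in Ω, ‖gradient v x‖ ^ 2) - K * ∫ x, |v x| * ‖gradient v x‖ ∂μ := by
    nlinarith
  exact hfinal.trans hmono
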